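/- Let μ and ν be finite Borel measures on ℝ^d and let A, B, C be packings. If A μ-dominates B (μ * χ_A ≥ μ * χ_B everywhere) and B ν-dominates C (ν * χ_B ≥ ν * χ_C everywhere), then A (μ*ν)-dominates C: (μ * ν * χ_A) ≥ (μ * ν * χ_C) everywhere. In particular, diffusive domination is a transitive relation on packings. -/
import Mathlib


open MeasureTheory Metric Filter Pointwise
open scoped ENNReal NNReal

noncomputable section

abbrev Euc (d : ℕ) : Type := EuclideanSpace ℝ (Fin d)

/-- A body: a compact domain (compact set equal to the closure of its interior). -/
def IsBody {d : ℕ} (K : Set (Euc d)) : Prop :=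
  IsCompact K ∧ K = closure (interior K)

/-- `D` is an isometric copy of `K`. -/
def IsIsomCopy {d : ℕ} (K D : Set (Euc d)) : Prop :=
  ∃ f : Euc d ≃ᵢ Euc d, D = f '' K

def PairwiseDisjointInteriors {d : ℕ} (P : Set (Set (Euc d))) : Prop :=
  P.Pairwise fun D E => interior D ∩ interior E = ∅

/-- A packing of the body `K`: a collection of isometric copies of `K`
with pairwise disjoint interiors. -/
def IsPacking {d : ℕ} (K : Set (Euc d)) (P : Set (Set (Euc d))) : Prop :=
  (∀ D ∈ P, IsIsomCopy K D) ∧ PairwiseDisjointInteriors P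

/-- Translate every element of a collection by the vector `v`. -/
def translatePacking {d : ℕ} (v : Euc d) (P : Set (Set (Euc d))) : Set (Set (Euc d)) :=
  (fun D => (fun x => x + v) '' D) '' P

/-- The fraction of the ball `B(p,r)` covered by the collection `P`
(the sum over elements of `P` of the volume of the intersection, divided
by the volume of the ball). -/
def ballFrac {d : ℕ} (P : Set (Set (Euc d))) (p : Euc d) (r : ℝ) : ℝ :=
  ((∑' D : P, volume ((D : Set (Euc d)) ∩ ball p r)) / volume (ball p r)).toReal

/-- `P` has density `δ`. -/
def HasDensity {d : ℕ} (P : Set (Set (Euc d))) (δ : ℝ) : Prop :=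
  ∀ p : Euc d, Tendsto (fun r => ballFrac P p r) atTop (nhds δ)

/-- `P` has density `δ` uniformly in the center point. -/
def HasUniformDensity {d : ℕ} (P : Set (Set (Euc d))) (δ : ℝ) : Prop :=
  TendstoUniformly (fun r (p : Euc d) => ballFrac P p r) (fun _ => δ) atTop

/-- The packing density of the body `K`. -/
def packingDensity {d : ℕ} (K : Set (Euc d)) : ℝ :=
  sSup {δ : ℝ | ∃ P, IsPacking K P ∧ HasDensity P δ}

/-- Modified Hausdorff distance at most `ε` between two collections: there is a
relation between elements, related elements are at Hausdorff distance at most `ε`,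
and every element meeting the ball `B(0,1/ε)` is related to a unique element on
the other side. -/
def PackingClose {d : ℕ} (ε : ℝ) (P Q : Set (Set (Euc d))) : Prop :=
  ∃ R : Set (Euc d) → Set (Euc d) → Prop,
    (∀ A B, R A B → A ∈ P ∧ B ∈ Q ∧ Metric.hausdorffDist A B ≤ ε) ∧
    (∀ A ∈ P, (A ∩ ball (0 : Euc d) (1 / ε)).Nonempty → ∃! B, R A B) ∧
    (∀ B ∈ Q, (B ∩ ball (0 : Euc d) (1 / ε)).Nonempty → ∃! A, R A B)

/-- Convergence of a sequence of collections to `Q` in the modified Hausdorff topology. -/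
def PackingTendsto {d : ℕ} (Ps : ℕ → Set (Set (Euc d))) (Q : Set (Set (Euc d))) : Prop :=
  ∀ ε : ℝ, 0 < ε → ∀ᶠ n in atTop, PackingClose ε (Ps n) Q

/-- `A ≽_L B` : some sequence of translates of `B` converges to `A`. -/
def IsLimitOf {d : ℕ} (A B : Set (Set (Euc d))) : Prop :=
  ∃ v : ℕ → Euc d, PackingTendsto (fun n => translatePacking (v n) B) A

/-- A packing of `K` is uniformly recurrent if it is maximal with respect to `≽_L`
among packings of `K`. -/
def UniformlyRecurrent {d : ℕ} (K : Set (Euc d)) (A : Set (Set (Euc d))) : Prop :=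
  ∀ B, IsPacking K B → IsLimitOf B A → IsLimitOf A B

/-- `P` is `n`-saturated: one cannot remove `n-1` of its elements and replace them
by `n` isometric copies of `K` so that the result is still a packing. -/
def Saturated {d : ℕ} (K : Set (Euc d)) (n : ℕ) (P : Set (Set (Euc d))) : Prop :=
  ¬ ∃ F G : Finset (Set (Euc d)), ↑F ⊆ P ∧ F.card = n - 1 ∧ G.card = n ∧
      Disjoint (↑G : Set (Set (Euc d))) (P \ ↑F) ∧
      IsPacking K ((P \ ↑F) ∪ ↑G)

def CompletelySaturated {d : ℕ} (K : Set (Euc d)) (P : Set (Set (Euc d))) : Prop :=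
  ∀ n : ℕ, 1 ≤ n → Saturated K n P

/-- `K` (strictly) self-nests: for every `ε > 0` some isometric copy of `K` lies in
the interior of `(1+ε)K`. -/
def SelfNests {d : ℕ} (K : Set (Euc d)) : Prop :=
  ∀ ε : ℝ, 0 < ε → ∃ f : Euc d ≃ᵢ Euc d, f '' K ⊆ interior ((1 + ε) • K)

/-- A single connected replacement: `A` is obtained from `B` by replacing `k < n`
copies of `K` by `k+1` copies so that the union of the `2k+1` copies involved is
connected. -/
def ConnStep {d : ℕ} (K : Set (Euc d)) (n : ℕ) (B A : Set (Set (Euc d))) : Prop :=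
  ∃ (k : ℕ) (F G : Finset (Set (Euc d))), k < n ∧ ↑F ⊆ B ∧ F.card = k ∧ G.card = k + 1 ∧
    Disjoint (↑G : Set (Set (Euc d))) (B \ ↑F) ∧
    A = (B \ ↑F) ∪ ↑G ∧ IsPacking K A ∧
    IsConnected (⋃ D ∈ (↑F ∪ ↑G : Set (Set (Euc d))), D)

/-- `A ≽_{C,n} B` : `A` is obtained from `B` by finitely many connected replacements. -/
def ConnGE {d : ℕ} (K : Set (Euc d)) (n : ℕ) (A B : Set (Set (Euc d))) : Prop :=
  Relation.ReflTransGen (ConnStep K n) B A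

/-- The density function of the convolution `μ * χ_P` evaluated at the point `p`:
`∑_{D ∈ P} μ {x | p - x ∈ D}`. -/
def diffuse {d : ℕ} (μ : Measure (Euc d)) (P : Set (Set (Euc d))) (p : Euc d) : ℝ≥0∞ :=
  ∑' D : P, μ {x : Euc d | p - x ∈ (D : Set (Euc d))}

/-- The value of the measure `χ_P * μ` on the (Borel) set `R`. -/
def diffuseOn {d : ℕ} (μ : Measure (Euc d)) (P : Set (Set (Euc d))) (R : Set (Euc d)) : ℝ≥0∞ :=
  ∫⁻ p in R, diffuse μ P p

/-- The measure with density `(n/(n+1))^{|x|/(2n-1)}` with respect to Lebesgue measure. -/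
def kupMeasure (d n : ℕ) : Measure (Euc d) :=
  volume.withDensity fun x =>
    ENNReal.ofReal (((n : ℝ) / (n + 1)) ^ (‖x‖ / (2 * (n : ℝ) - 1)))

/-- A generic packing: a collection of bodies with pairwise disjoint interiors. -/
def IsGenPacking {d : ℕ} (P : Set (Set (Euc d))) : Prop :=
  (∀ D ∈ P, IsBody D) ∧ PairwiseDisjointInteriors P

/-- `A ≽_μ B` : `μ * χ_A ≥ μ * χ_B` everywhere. -/
def MuDom {d : ℕ} (μ : Measure (Euc d)) (A B : Set (Set (Euc d))) : Prop :=
  ∀ p : Euc d, diffuse μ B p ≤ diffuse μ A p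

/-- `A ≽_D B` : `A` diffusively dominates `B`. -/
def DiffDom {d : ℕ} (A B : Set (Set (Euc d))) : Prop :=
  ∃ μ : Measure (Euc d), IsFiniteMeasure μ ∧ MuDom μ A B

/-- `P` is weakly recurrent if it is the limit of a sequence of uniformly
recurrent packings of `K`. -/
def WeaklyRecurrent {d : ℕ} (K : Set (Euc d)) (P : Set (Set (Euc d))) : Prop :=
  ∃ Bs : ℕ → Set (Set (Euc d)),
    (∀ i, IsPacking K (Bs i) ∧ UniformlyRecurrent K (Bs i)) ∧ PackingTendsto Bs P


lemma packing_countable {d : ℕ} (P : Set (Set (Euc d))) (hP : IsGenPacking P) :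
    P.Countable := by
  have h1 : {D ∈ P | (interior D).Nonempty}.Countable := by
    apply Set.PairwiseDisjoint.countable_of_isOpen (s := fun D : Set (Euc d) => interior D)
    · intro D hD E hE hne
      exact Set.disjoint_iff_inter_eq_empty.mpr (hP.2 hD.1 hE.1 hne)
    · intro D _; exact isOpen_interior
    · intro D hD; exact hD.2
  refine (h1.union (Set.countable_singleton ∅)).mono ?_
  intro D hD
  by_cases h : (interior D).Nonempty
  · exact Or.inl ⟨hD, h⟩
  · have hbody := (hP.1 D hD).2
    rw [Set.not_nonempty_iff_eq_empty] at h
    rw [h, closure_empty] at hbody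
    exact Or.inr (by simp [hbody])

lemma diffuse_conv {d : ℕ} (μ ν : Measure (Euc d)) [SFinite ν]
    (P : Set (Set (Euc d))) (hP : IsGenPacking P) (p : Euc d) :
    diffuse (μ.conv ν) P p = ∫⁻ y, diffuse ν P (p - y) ∂μ := by
  have hcnt : Countable ↥P := (packing_countable P hP).to_subtype
  have hmeas : ∀ D : P, MeasurableSet (D : Set (Euc d)) := fun D => (hP.1 D D.2).1.measurableSet
  have hsub : Measurable fun x : Euc d => p - x := measurable_const.sub measurable_id
  have hterm : ∀ D : P, (μ.conv ν) {x : Euc d | p - x ∈ (D : Set (Euc d))}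
      = ∫⁻ y, ν {z : Euc d | p - y - z ∈ (D : Set (Euc d))} ∂μ := by
    intro D
    have hS : MeasurableSet {x : Euc d | p - x ∈ (D : Set (Euc d))} := hsub (hmeas D)
    rw [Measure.conv, Measure.map_apply (by fun_prop) hS,
      Measure.prod_apply ((by fun_prop : Measurable fun q : Euc d × Euc d => q.1 + q.2) hS)]
    refine lintegral_congr fun y => ?_
    congr 1
    ext z
    simp [sub_sub]
  have hmeasy : ∀ D : P,
      Measurable fun y : Euc d => ν {z : Euc d | p - y - z ∈ (D : Set (Euc d))} := by
    intro D
    have hT : MeasurableSet ((fun q : Euc d × Euc d => p - q.1 - q.2) ⁻¹' (D : Set (Euc d))) :=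
      (by fun_prop : Measurable fun q : Euc d × Euc d => p - q.1 - q.2) (hmeas D)
    exact measurable_measure_prodMk_left hT
  calc diffuse (μ.conv ν) P p
      = ∑' D : P, ∫⁻ y, ν {z : Euc d | p - y - z ∈ (D : Set (Euc d))} ∂μ := tsum_congr hterm
    _ = ∫⁻ y, ∑' D : P, ν {z : Euc d | p - y - z ∈ (D : Set (Euc d))} ∂μ :=
        (lintegral_tsum fun D => (hmeasy D).aemeasurable).symm
    _ = ∫⁻ y, diffuse ν P (p - y) ∂μ := by
        refine lintegral_congr fun y => tsum_congr fun D => ?_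
        simp [diffuse, sub_sub]

/-- If `A` `μ`-dominates `B` and `B` `ν`-dominates `C`, then `A`
`(μ*ν)`-dominates `C`. In particular, diffusive domination is transitive. -/
theorem muDom_conv_trans {d : ℕ} :
    (∀ (μ ν : Measure (Euc d)), IsFiniteMeasure μ → IsFiniteMeasure ν →
      ∀ A B C : Set (Set (Euc d)), IsGenPacking A → IsGenPacking B → IsGenPacking C →
        MuDom μ A B → MuDom ν B C → MuDom (μ.conv ν) A C) ∧
    (∀ A B C : Set (Set (Euc d)), IsGenPacking A → IsGenPacking B → IsGenPacking C →
        DiffDom A B → DiffDom B C → DiffDom A C) := by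
  have main : ∀ (μ ν : Measure (Euc d)), IsFiniteMeasure μ → IsFiniteMeasure ν →
      ∀ A B C : Set (Set (Euc d)), IsGenPacking A → IsGenPacking B → IsGenPacking C →
        MuDom μ A B → MuDom ν B C → MuDom (μ.conv ν) A C := by
    intro μ ν hμ hν A B C hA hB hC hAB hBC p
    have h3 : ∀ P, IsGenPacking P →
        diffuse (μ.conv ν) P p = ∫⁻ z, diffuse μ P (p - z) ∂ν := by
      intro P hP
      rw [Measure.conv_comm]
      exact diffuse_conv ν μ P hP p
    calc diffuse (μ.conv ν) C p = ∫⁻ y, diffuse ν C (p - y) ∂μ := diffuse_conv μ ν C hC p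
      _ ≤ ∫⁻ y, diffuse ν B (p - y) ∂μ := lintegral_mono fun y => hBC (p - y)
      _ = diffuse (μ.conv ν) B p := (diffuse_conv μ ν B hB p).symm
      _ = ∫⁻ z, diffuse μ B (p - z) ∂ν := h3 B hB
      _ ≤ ∫⁻ z, diffuse μ A (p - z) ∂ν := lintegral_mono fun z => hAB (p - z)
      _ = diffuse (μ.conv ν) A p := (h3 A hA).symm
  refine ⟨main, ?_⟩
  rintro A B C hA hB hC ⟨μ, hμ, hAB⟩ ⟨ν, hν, hBC⟩
  exact ⟨μ.conv ν, Measure.finite_of_finite_conv μ ν, main μ ν hμ hν A B C hA hB hC hAB hBC⟩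
end
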